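/- Let d be a positive integer, r > 0, and let ρ : ℝ^d → ℝ be a positive function such that for every x ∈ ℝ^d the majorant H(x) := sup_{y ∈ ℝ^d} ρ(y) · (1 + |x-y|/ρ(y))^{-r} is finite (the supremand is bounded above in y for each x). Then: (i) H(x) ≥ ρ(x) for every x ∈ ℝ^d (so H is positive); and (ii) there exists a constant C_r > 0, depending only on r, such that for every x ∈ ℝ^d, sup_{z ∈ ℝ^d} H(z) · (1 + |x-z|/H(z))^{-r} ≤ C_r · H(x); in particular H is self-majorizing of order r. -/

import Mathlib

open Real

noncomputable def majorant (d : ℕ) (r : ℝ) (ρ : EuclideanSpace ℝ (Fin d) → ℝ) :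
    EuclideanSpace ℝ (Fin d) → ℝ :=
  fun x => ⨆ y, ρ y * (1 + ‖x - y‖ / ρ y) ^ (-r)


/-- The key scalar inequality: with `a = ρy (1+u)^(-r)`,
`a (1 + s/a)^(-r) ≤ ρy (1+w)^(-r)` whenever `w ≤ u + s/ρy`. -/
lemma majorant_aux_scalar {r s ρy u w : ℝ} (hr : 0 < r) (hρ : 0 < ρy) (hs : 0 ≤ s)
    (hu : 0 ≤ u) (hw0 : 0 ≤ w) (hw : w ≤ u + s / ρy) :
    (ρy * (1 + u) ^ (-r)) * (1 + s / (ρy * (1 + u) ^ (-r))) ^ (-r) ≤ ρy * (1 + w) ^ (-r) := by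
  have h1u : (0:ℝ) < 1 + u := by linarith
  have hpow : (0:ℝ) < (1 + u) ^ (-r) := Real.rpow_pos_of_pos h1u _
  have ha : (0:ℝ) < ρy * (1 + u) ^ (-r) := mul_pos hρ hpow
  have hsa : s / (ρy * (1 + u) ^ (-r)) = (s / ρy) * (1 + u) ^ r := by
    rw [Real.rpow_neg h1u.le]
    field_simp
  rw [hsa, mul_assoc]
  gcongr ρy * ?_
  rw [← Real.mul_rpow h1u.le (by positivity)]
  apply Real.rpow_le_rpow_of_nonpos (by linarith) _ (by linarith)
  have h1 : (1:ℝ) + u ≤ (1 + u) ^ (1 + r) := by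
    nth_rewrite 1 [← Real.rpow_one (1 + u)]
    exact Real.rpow_le_rpow_of_exponent_le (by linarith) (by linarith)
  have h2 : (1 + u) * (1 + s / ρy * (1 + u) ^ r) = (1 + u) + s / ρy * (1 + u) ^ (1 + r) := by
    rw [Real.rpow_add h1u 1 r, Real.rpow_one]; ring
  have hsρ : 0 ≤ s / ρy := by positivity
  calc 1 + w ≤ 1 + u + s / ρy := by linarith
    _ ≤ (1 + u) + s / ρy * (1 + u) ^ (1 + r) := by nlinarith [Real.one_le_rpow (by linarith : (1:ℝ) ≤ 1 + u) (by linarith : (0:ℝ) ≤ 1 + r)]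
    _ = (1 + u) * (1 + s / ρy * (1 + u) ^ r) := h2.symm

theorem majorant_self_majorizing (d : ℕ) (hd : 0 < d) (r : ℝ) (hr : 0 < r) :
    ∃ Cr > 0, ∀ ρ : EuclideanSpace ℝ (Fin d) → ℝ, (∀ x, 0 < ρ x) →
      (∀ x, BddAbove (Set.range fun y => ρ y * (1 + ‖x - y‖ / ρ y) ^ (-r))) →
      (∀ x, ρ x ≤ majorant d r ρ x) ∧
      (∀ x z, majorant d r ρ z * (1 + ‖x - z‖ / majorant d r ρ z) ^ (-r) ≤
          Cr * majorant d r ρ x) ∧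
      (∃ Csm > 0, ∀ x z, majorant d r ρ z ≥
          Csm * majorant d r ρ x * (1 + ‖x - z‖ / majorant d r ρ x) ^ (-r)) := by
  refine ⟨1, one_pos, fun ρ hρ hbdd => ?_⟩
  set H := majorant d r ρ with hH
  -- (i) ρ ≤ H
  have hge : ∀ x, ρ x ≤ H x := by
    intro x
    have := le_ciSup (hbdd x) x
    simpa [hH, majorant] using this
  have hHpos : ∀ x, 0 < H x := fun x => lt_of_lt_of_le (hρ x) (hge x)
  -- main inequality: H z * (1 + ‖x-z‖/H z)^(-r) ≤ H x
  have main : ∀ x z, H z * (1 + ‖x - z‖ / H z) ^ (-r) ≤ H x := by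
    intro x z
    set s := ‖x - z‖ with hs
    have hs0 : 0 ≤ s := norm_nonneg _
    -- the monotone continuous map f
    set f : ℝ → ℝ := fun t => max t 0 * (1 + s / max t 0) ^ (-r) with hf
    have hfval : ∀ t : ℝ, 0 < t → f t = t * (1 + s / t) ^ (-r) := by
      intro t ht; simp [hf, max_eq_left ht.le]
    -- alternative formula for f on nonneg: f t = m * (m/(m+s))^r where m = max t 0, when m + s > 0
    have hform : ∀ t : ℝ, 0 < max t 0 + s →
        f t = max t 0 * (max t 0 / (max t 0 + s)) ^ r := by
      intro t hms
      rcases le_or_gt t 0 with h | h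
      · simp [hf, max_eq_right h]
      · have hm : max t 0 = t := max_eq_left h.le
        rw [hf]
        simp only [hm]
        congr 1
        have : 1 + s / t = (t + s) / t := by field_simp
        rw [this, Real.rpow_neg (by positivity), ← Real.inv_rpow (by positivity), inv_div]
    rcases eq_or_lt_of_le hs0 with hs0' | hspos
    · -- s = 0 : x = z
      have hxz : x = z := by
        have : ‖x - z‖ = 0 := hs0'.symm
        rw [sub_eq_zero.mp (norm_eq_zero.mp this)]
      subst hxz
      rw [← hs0']
      simp [(hHpos x).ne']
    · -- s > 0
      have hmono : Monotone f := by
        intro a b hab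
        have hma : 0 ≤ max a 0 := le_max_right _ _
        have hmab : max a 0 ≤ max b 0 := max_le_max hab le_rfl
        rw [hform a (by positivity), hform b (by positivity)]
        have hda : max a 0 / (max a 0 + s) ≤ max b 0 / (max b 0 + s) := by
          rw [div_le_div_iff₀ (by positivity) (by positivity)]
          nlinarith
        exact mul_le_mul hmab (Real.rpow_le_rpow (by positivity) hda hr.le)
          (Real.rpow_nonneg (by positivity) _) (le_max_right _ _)
      have hcont : Continuous f := by
        have hm : Continuous (fun t : ℝ => max t 0) := continuous_id.max continuous_const
        have hne : ∀ t : ℝ, max t 0 + s ≠ 0 := fun t => by positivity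
        have : Continuous (fun t : ℝ => max t 0 * (max t 0 / (max t 0 + s)) ^ r) :=
          hm.mul (Continuous.rpow_const (hm.div (hm.add continuous_const) hne)
            (fun t => Or.inr hr.le))
        have heq : f = fun t : ℝ => max t 0 * (max t 0 / (max t 0 + s)) ^ r := by
          funext t; exact hform t (by positivity)
        rw [heq]; exact this
      -- termwise bound
      have hterm : ∀ y, f (ρ y * (1 + ‖z - y‖ / ρ y) ^ (-r)) ≤ H x := by
        intro y
        have hρy := hρ y
        have hay : (0:ℝ) < ρ y * (1 + ‖z - y‖ / ρ y) ^ (-r) := by positivity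
        rw [hfval _ hay]
        refine le_trans ?_ (le_ciSup (hbdd x) y)
        apply majorant_aux_scalar hr hρy hs0 (by positivity) (by positivity)
        have htri : ‖x - y‖ ≤ ‖x - z‖ + ‖z - y‖ := by
          calc ‖x - y‖ = ‖(x - z) + (z - y)‖ := by rw [sub_add_sub_cancel]
            _ ≤ ‖x - z‖ + ‖z - y‖ := norm_add_le _ _
        rw [← add_div, div_le_div_iff₀ hρy hρy]
        nlinarith
      -- f (H z) = ⨆ f ∘ a
      have hmap : f (H z) = ⨆ y, f (ρ y * (1 + ‖z - y‖ / ρ y) ^ (-r)) :=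
        Monotone.map_ciSup_of_continuousAt (hcont.continuousAt) hmono (hbdd z)
      have : f (H z) ≤ H x := by
        rw [hmap]
        exact ciSup_le hterm
      rwa [hfval _ (hHpos z)] at this
  refine ⟨hge, fun x z => by simpa using main x z, 1, one_pos, fun x z => ?_⟩
  have := main z x
  rw [norm_sub_rev] at this
  simpa using this
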